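/- Let n ≥ 2 and 1 ≤ p ≤ n. There exists a constant ν₀ > 0, depending only on n and p, with the following property: for every λ ∈ 𝒫_p and every index j with λ_j < 0, one has F_j(λ) ≥ ν₀ (1 + ∑_{i=1}^n F_i(λ)). -/

import Mathlib

open Finset

/-- The cone `𝒫_p ⊆ ℝ^n`: every sum of `p` pairwise distinct components is positive. -/
def Pcone (n p : ℕ) : Set (Fin n → ℝ) :=
  {lam | ∀ S : Finset (Fin n), S.card = p → 0 < ∑ i ∈ S, lam i}

/-- `M_p^n(λ) = ∏_{|S| = p} ∑_{i ∈ S} λ_i`. -/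
def Mpn (n p : ℕ) (lam : Fin n → ℝ) : ℝ :=
  ∏ S ∈ Finset.univ.powersetCard p, ∑ i ∈ S, lam i

/-- `F(λ) = (M_p^n(λ))^{1/C(n,p)}`. -/
noncomputable def Fpn (n p : ℕ) (lam : Fin n → ℝ) : ℝ :=
  Mpn n p lam ^ ((n.choose p : ℝ)⁻¹)

/-- `F_i(λ) = ∂F/∂λ_i (λ)`. -/
noncomputable def Fi (n p : ℕ) (lam : Fin n → ℝ) (i : Fin n) : ℝ :=
  fderiv ℝ (Fpn n p) lam (Pi.single i 1)


lemma hasFDerivAt_Mpn (n p : ℕ) (lam : Fin n → ℝ) :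
    HasFDerivAt (Mpn n p)
      (∑ S ∈ Finset.univ.powersetCard p,
        (∏ T ∈ (Finset.univ.powersetCard p).erase S, ∑ k ∈ T, lam k) •
          (∑ i ∈ S, ContinuousLinearMap.proj (R := ℝ) (φ := fun _ : Fin n => ℝ) i)) lam := by
  classical
  exact HasFDerivAt.finset_prod (fun S _ =>
    HasFDerivAt.fun_sum (fun i _ => (ContinuousLinearMap.proj (R := ℝ)
      (φ := fun _ : Fin n => ℝ) i).hasFDerivAt))

lemma hasFDerivAt_Fpn (n p : ℕ) (lam : Fin n → ℝ) (hM : Mpn n p lam ≠ 0) :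
    HasFDerivAt (Fpn n p)
      (((n.choose p : ℝ)⁻¹ * Mpn n p lam ^ ((n.choose p : ℝ)⁻¹ - 1)) •
        ∑ S ∈ Finset.univ.powersetCard p,
          (∏ T ∈ (Finset.univ.powersetCard p).erase S, ∑ k ∈ T, lam k) •
            (∑ i ∈ S, ContinuousLinearMap.proj (R := ℝ) (φ := fun _ : Fin n => ℝ) i)) lam :=
  (hasFDerivAt_Mpn n p lam).rpow_const (Or.inl hM)

lemma Fi_eq (n p : ℕ) (lam : Fin n → ℝ) (hM : Mpn n p lam ≠ 0) (i : Fin n) :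
    Fi n p lam i = ((n.choose p : ℝ)⁻¹ * Mpn n p lam ^ ((n.choose p : ℝ)⁻¹ - 1)) *
      ∑ S ∈ (Finset.univ.powersetCard p).filter (fun S => i ∈ S),
        ∏ T ∈ (Finset.univ.powersetCard p).erase S, ∑ k ∈ T, lam k := by
  classical
  rw [Fi, (hasFDerivAt_Fpn n p lam hM).fderiv]
  simp only [ContinuousLinearMap.smul_apply, ContinuousLinearMap.coe_sum',
    Finset.sum_apply, ContinuousLinearMap.coe_smul', Pi.smul_apply,
    ContinuousLinearMap.proj_apply, smul_eq_mul]
  rw [Finset.sum_filter]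
  congr 1
  refine Finset.sum_congr rfl (fun S _ => ?_)
  rw [Finset.sum_pi_single']
  split <;> simp

lemma key_lemma (n p : ℕ) (hn : 2 ≤ n) (hp1 : 1 ≤ p) (hpn : p ≤ n)
    (lam : Fin n → ℝ) (hlam : lam ∈ Pcone n p) (j : Fin n) (hj : lam j < 0) (i : Fin n)
    (Q : Finset (Fin n) → ℝ)
    (hQpos : ∀ S ∈ Finset.univ.powersetCard p, 0 < Q S)
    (hQmono : ∀ S ∈ Finset.univ.powersetCard p, ∀ S' ∈ Finset.univ.powersetCard p,
      (∑ k ∈ S', lam k) ≤ ∑ k ∈ S, lam k → Q S ≤ Q S') :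
    (∑ S ∈ (Finset.univ.powersetCard p).filter (fun S => i ∈ S), Q S) ≤
      (n + 1) * ∑ S ∈ (Finset.univ.powersetCard p).filter (fun S => j ∈ S), Q S := by
  classical
  set P := (Finset.univ : Finset (Fin n)).powersetCard p with hPdef
  have hσ : ∀ S ∈ P, 0 < ∑ k ∈ S, lam k := fun S hS =>
    hlam S ((Finset.mem_powersetCard_univ).1 hS)
  set Aj := ∑ S ∈ P.filter (fun S => j ∈ S), Q S with hAj
  have hAjnn : 0 ≤ Aj :=
    Finset.sum_nonneg fun S hS => (hQpos S (Finset.mem_of_mem_filter S hS)).le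
  -- split A i
  rw [← Finset.sum_filter_add_sum_filter_not (P.filter (fun S => i ∈ S)) (fun S => j ∈ S) Q]
  have part1 : ∑ S ∈ (P.filter (fun S => i ∈ S)).filter (fun S => j ∈ S), Q S ≤ Aj := by
    refine Finset.sum_le_sum_of_subset_of_nonneg ?_ ?_
    · intro S hS
      simp only [Finset.mem_filter] at hS ⊢
      exact ⟨hS.1.1, hS.2⟩
    · intro S hS _
      exact (hQpos S (Finset.mem_of_mem_filter S hS)).le
  set D := (P.filter (fun S => i ∈ S)).filter (fun S => ¬ j ∈ S) with hD
  have hDmem : ∀ S ∈ D, S ∈ P ∧ j ∉ S := by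
    intro S hS
    simp only [hD, Finset.mem_filter] at hS
    exact ⟨hS.1.1, hS.2⟩
  -- choice of positive element
  have hex : ∀ S : Finset (Fin n), ∃ k : Fin n, S ∈ P → (k ∈ S ∧ 0 < lam k) := by
    intro S
    by_cases hS : S ∈ P
    · by_contra h
      push_neg at h
      have h0 : ∀ k ∈ S, lam k ≤ 0 := fun k hk => (h k).2 hk
      have : (∑ k ∈ S, lam k) ≤ 0 := Finset.sum_nonpos h0
      exact absurd (hσ S hS) (not_lt.2 this)
    · exact ⟨⟨0, by omega⟩, fun h => absurd h hS⟩
  choose k hk using hex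
  set φ : Finset (Fin n) → Finset (Fin n) := fun S => insert j (S.erase (k S)) with hφ
  have hfacts : ∀ S ∈ D, φ S ∈ P ∧ j ∈ φ S ∧ (∑ m ∈ φ S, lam m) ≤ (∑ m ∈ S, lam m)
      ∧ S = insert (k S) ((φ S).erase j) := by
    intro S hS
    obtain ⟨hSP, hjS⟩ := hDmem S hS
    obtain ⟨hkS, hkpos⟩ := hk S hSP
    have hcard : S.card = p := (Finset.mem_powersetCard_univ).1 hSP
    have hjne : j ∉ S.erase (k S) := fun h => hjS (Finset.mem_of_mem_erase h)
    have hc : (φ S).card = p := by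
      rw [hφ]
      rw [Finset.card_insert_of_notMem hjne, Finset.card_erase_of_mem hkS, hcard]
      omega
    have hsum : (∑ m ∈ φ S, lam m) = lam j + ((∑ m ∈ S, lam m) - lam (k S)) := by
      rw [hφ]
      rw [Finset.sum_insert hjne]
      congr 1
      rw [← Finset.sum_erase_add S lam hkS]
      ring
    refine ⟨(Finset.mem_powersetCard_univ).2 hc, Finset.mem_insert_self _ _, ?_, ?_⟩
    · rw [hsum]; linarith
    · rw [hφ, Finset.erase_insert hjne, Finset.insert_erase hkS]
  have hQφ : ∀ S ∈ D, Q S ≤ Q (φ S) := by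
    intro S hS
    obtain ⟨hφP, _, hle, _⟩ := hfacts S hS
    exact hQmono S (hDmem S hS).1 (φ S) hφP hle
  have part2 : ∑ S ∈ D, Q S ≤ n * Aj := by
    calc ∑ S ∈ D, Q S ≤ ∑ S ∈ D, Q (φ S) := Finset.sum_le_sum hQφ
      _ = ∑ S' ∈ D.image φ, #{S ∈ D | φ S = S'} • Q S' := Finset.sum_comp Q φ
      _ ≤ ∑ S' ∈ D.image φ, n * Q S' := by
          refine Finset.sum_le_sum fun S' hS' => ?_
          rw [nsmul_eq_mul]
          obtain ⟨S, hSD, hSe⟩ := Finset.mem_image.1 hS'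
          have hQnn : 0 ≤ Q S' := by
            have := (hfacts S hSD).1
            rw [hSe] at this
            exact (hQpos S' this).le
          refine mul_le_mul_of_nonneg_right ?_ hQnn
          have hcb : #{S ∈ D | φ S = S'} ≤ n := by
            have : #{S ∈ D | φ S = S'} ≤ (Finset.univ : Finset (Fin n)).card := by
              refine Finset.card_le_card_of_injOn k (fun _ _ => Finset.mem_univ _) ?_
              intro S1 hS1 S2 hS2 hkeq
              simp only [Finset.mem_coe, Finset.mem_filter] at hS1 hS2
              have e1 := (hfacts S1 hS1.1).2.2.2
              have e2 := (hfacts S2 hS2.1).2.2.2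
              rw [e1, e2, hkeq, hS1.2, hS2.2]
            simpa using this
          exact_mod_cast hcb
      _ ≤ n * Aj := by
          rw [← Finset.mul_sum]
          refine mul_le_mul_of_nonneg_left ?_ (by positivity)
          refine Finset.sum_le_sum_of_subset_of_nonneg ?_ ?_
          · intro S' hS'
            obtain ⟨S, hSD, hSe⟩ := Finset.mem_image.1 hS'
            obtain ⟨h1, h2, _, _⟩ := hfacts S hSD
            rw [← hSe]
            exact Finset.mem_filter.2 ⟨h1, h2⟩
          · intro S hS _
            exact (hQpos S (Finset.mem_of_mem_filter S hS)).le
  linarith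

/-- There exists `ν₀ > 0` depending only on `n` and `p` such that for every
`λ ∈ 𝒫_p` and every index `j` with `λ_j < 0` one has `F_j(λ) ≥ ν₀ (1 + ∑_i F_i(λ))`. -/
theorem Fi_neg_component_lower_bound (n p : ℕ) (hn : 2 ≤ n) (hp1 : 1 ≤ p) (hpn : p ≤ n) :
    ∃ ν₀ : ℝ, 0 < ν₀ ∧
      ∀ lam ∈ Pcone n p, ∀ j : Fin n, lam j < 0 →
        ν₀ * (1 + ∑ i, Fi n p lam i) ≤ Fi n p lam j := by
  classical
  refine ⟨(2 * n * (n + 1) : ℝ)⁻¹, by positivity, ?_⟩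
  intro lam hlam j hj
  set P := (Finset.univ : Finset (Fin n)).powersetCard p with hPdef
  have hσ : ∀ S ∈ P, 0 < ∑ k ∈ S, lam k := fun S hS =>
    hlam S ((Finset.mem_powersetCard_univ).1 hS)
  have hM : 0 < Mpn n p lam := Finset.prod_pos hσ
  set r : ℝ := (n.choose p : ℝ)⁻¹ with hr
  have hCpos : 0 < (n.choose p : ℝ) := by
    exact_mod_cast Nat.choose_pos hpn
  have hrpos : 0 < r := by positivity
  set M : ℝ := Mpn n p lam with hMdef
  set Q : Finset (Fin n) → ℝ := fun S => ∏ T ∈ P.erase S, ∑ k ∈ T, lam k with hQdef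
  set c : ℝ := r * M ^ (r - 1) with hc
  have hcpos : 0 < c := by
    refine mul_pos hrpos (Real.rpow_pos_of_pos hM _)
  have hQpos : ∀ S ∈ P, 0 < Q S := fun S _ =>
    Finset.prod_pos fun T hT => hσ T (Finset.mem_of_mem_erase hT)
  have hQM : ∀ S ∈ P, Q S = M * (∑ k ∈ S, lam k)⁻¹ := by
    intro S hS
    have h1 : Q S * (∑ k ∈ S, lam k) = M := Finset.prod_erase_mul P _ hS
    field_simp [(hσ S hS).ne']
    linarith [h1]
  have hQmono : ∀ S ∈ P, ∀ S' ∈ P,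
      (∑ k ∈ S', lam k) ≤ ∑ k ∈ S, lam k → Q S ≤ Q S' := by
    intro S hS S' hS' hle
    rw [hQM S hS, hQM S' hS']
    have := inv_anti₀ (hσ S' hS') hle
    exact mul_le_mul_of_nonneg_left this hM.le
  have hFi : ∀ i, Fi n p lam i = c * ∑ S ∈ P.filter (fun S => i ∈ S), Q S :=
    fun i => Fi_eq n p lam hM.ne' i
  -- card of P
  have hPcard : P.card = n.choose p := by
    rw [hPdef, Finset.card_powersetCard, Finset.card_univ, Fintype.card_fin]
  -- (ii) AM-GM: 1 ≤ c * ∑ Q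
  have hAMGM : 1 ≤ c * ∑ S ∈ P, Q S := by
    have hgm := Real.geom_mean_le_arith_mean_weighted P (fun _ => r)
      (fun S => (∑ k ∈ S, lam k)⁻¹) (fun _ _ => hrpos.le)
      (by rw [Finset.sum_const, hPcard, nsmul_eq_mul, hr]; field_simp)
      (fun S hS => inv_nonneg.2 (hσ S hS).le)
    have hlhs : (∏ S ∈ P, ((∑ k ∈ S, lam k)⁻¹) ^ r) = (M ^ r)⁻¹ := by
      rw [Real.finset_prod_rpow P _ (fun S hS => inv_nonneg.2 (hσ S hS).le),
        ← Real.inv_rpow hM.le]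
      congr 1
      rw [hMdef, Mpn, ← hPdef]
      exact Finset.prod_inv_distrib _
    rw [hlhs] at hgm
    have hMr : 0 < M ^ r := Real.rpow_pos_of_pos hM _
    have h2 : (1 : ℝ) ≤ M ^ r * ∑ S ∈ P, r * (∑ k ∈ S, lam k)⁻¹ := by
      calc (1:ℝ) = M ^ r * (M ^ r)⁻¹ := by field_simp
        _ ≤ _ := mul_le_mul_of_nonneg_left hgm hMr.le
    calc (1:ℝ) ≤ M ^ r * ∑ S ∈ P, r * (∑ k ∈ S, lam k)⁻¹ := h2
      _ = c * ∑ S ∈ P, Q S := by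
          rw [Finset.mul_sum, Finset.mul_sum]
          refine Finset.sum_congr rfl fun S hS => ?_
          rw [hQM S hS, hc, Real.rpow_sub_one hM.ne']
          field_simp
  -- (i) double counting
  have hdouble : ∑ i, (∑ S ∈ P.filter (fun S => i ∈ S), Q S) = p * ∑ S ∈ P, Q S := by
    have : ∀ i : Fin n, (∑ S ∈ P.filter (fun S => i ∈ S), Q S)
        = ∑ S ∈ P, if i ∈ S then Q S else 0 := fun i => Finset.sum_filter _ _
    simp_rw [this]
    rw [Finset.sum_comm, Finset.mul_sum]
    refine Finset.sum_congr rfl fun S hS => ?_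
    rw [Finset.sum_ite_mem, Finset.univ_inter, Finset.sum_const,
      (Finset.mem_powersetCard_univ).1 hS, nsmul_eq_mul]
  -- (iii) key
  have hkey : ∀ i : Fin n, (∑ S ∈ P.filter (fun S => i ∈ S), Q S) ≤
      (n + 1) * ∑ S ∈ P.filter (fun S => j ∈ S), Q S := fun i =>
    key_lemma n p hn hp1 hpn lam hlam j hj i Q hQpos hQmono
  -- assembly
  set Aj := ∑ S ∈ P.filter (fun S => j ∈ S), Q S with hAj
  have hsumFi : ∑ i, Fi n p lam i = c * (p * ∑ S ∈ P, Q S) := by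
    simp_rw [hFi]
    rw [← Finset.mul_sum, hdouble]
  have hp1' : (1:ℝ) ≤ p := by exact_mod_cast hp1
  have hge1 : 1 ≤ ∑ i, Fi n p lam i := by
    rw [hsumFi]
    calc (1:ℝ) ≤ c * ∑ S ∈ P, Q S := hAMGM
      _ ≤ p * (c * ∑ S ∈ P, Q S) := le_mul_of_one_le_left (le_trans zero_le_one hAMGM) hp1'
      _ = c * (p * ∑ S ∈ P, Q S) := by ring
  have hub : ∑ i, Fi n p lam i ≤ n * (n + 1) * (c * Aj) := by
    simp_rw [hFi]
    rw [← Finset.mul_sum]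
    have : (∑ i : Fin n, ∑ S ∈ P.filter (fun S => i ∈ S), Q S) ≤ n * ((n+1) * Aj) := by
      calc _ ≤ ∑ _i : Fin n, (n + 1) * Aj := Finset.sum_le_sum fun i _ => hkey i
        _ = n * ((n+1) * Aj) := by rw [Finset.sum_const, Finset.card_univ,
            Fintype.card_fin, nsmul_eq_mul]
    calc c * (∑ i : Fin n, ∑ S ∈ P.filter (fun S => i ∈ S), Q S)
        ≤ c * (n * ((n+1) * Aj)) := mul_le_mul_of_nonneg_left this hcpos.le
      _ = n * (n + 1) * (c * Aj) := by ring
  have hFij : Fi n p lam j = c * Aj := hFi j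
  rw [hFij]
  have hnn : (0:ℝ) < 2 * n * (n + 1) := by positivity
  rw [inv_mul_le_iff₀ hnn]
  have : 1 + ∑ i, Fi n p lam i ≤ 2 * ∑ i, Fi n p lam i := by linarith
  calc 1 + ∑ i, Fi n p lam i ≤ 2 * ∑ i, Fi n p lam i := this
    _ ≤ 2 * (n * (n + 1) * (c * Aj)) := by linarith
    _ = 2 * n * (n + 1) * (c * Aj) := by ring
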